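/- arXiv:0902.1663 — 2 statements merged into one kernel-verified Lean document; each statement's English description precedes it below -/
import Mathlib

section
/- The coefficient of x1^{s1} ... xk^{sk} in h_{r1}(x1,...,xk)...h_{rℓ}(x1,...,xk) equals the coefficient of x1^{r1} ... xℓ^{rℓ} in h_{s1}(x1,...,xℓ)...h_{sk}(x1,...,xℓ), whenever s1+...+sk = r1+...+rℓ. -/
open MvPolynomial Finset

/-- The complete homogeneous symmetric polynomial of degree `m` in `k` variables. -/
noncomputable def hpoly (k m : ℕ) : MvPolynomial (Fin k) ℕ :=
  ∑ d ∈ Finset.Nat.antidiagonalTuple k m, ∏ i, MvPolynomial.X i ^ d i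

lemma prod_univ_X_pow_eq_monomial {k : ℕ} (d : Fin k → ℕ) :
    (∏ i, (MvPolynomial.X i : MvPolynomial (Fin k) ℕ) ^ d i) =
      MvPolynomial.monomial (Finsupp.equivFunOnFinite.symm d) 1 := by
  rw [← MvPolynomial.prod_X_pow_eq_monomial]
  rw [← Finset.prod_subset (Finset.subset_univ (Finsupp.equivFunOnFinite.symm d).support)]
  · simp
  · intro x _ hx
    simp only [Finsupp.notMem_support_iff] at hx
    simp only [Finsupp.coe_equivFunOnFinite_symm] at hx ⊢
    simp [hx]

lemma coeff_prod_hpoly (k l : ℕ) (s : Fin k → ℕ) (r : Fin l → ℕ) :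
    MvPolynomial.coeff (Finsupp.equivFunOnFinite.symm s) (∏ j, hpoly k (r j)) =
      ((Fintype.piFinset fun j => Finset.Nat.antidiagonalTuple k (r j)).filter
        (fun M => ∀ i, ∑ j, M j i = s i)).card := by
  unfold hpoly
  rw [Finset.prod_univ_sum]
  rw [MvPolynomial.coeff_sum]
  rw [Finset.card_filter]
  refine Finset.sum_congr rfl fun M _ => ?_
  have : (∏ j, ∏ i, (MvPolynomial.X i : MvPolynomial (Fin k) ℕ) ^ M j i) =
      ∏ i, (MvPolynomial.X i : MvPolynomial (Fin k) ℕ) ^ (∑ j, M j i) := by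
    rw [Finset.prod_comm]
    exact Finset.prod_congr rfl fun i _ => (Finset.prod_pow_eq_pow_sum _ _ _)
  rw [this, prod_univ_X_pow_eq_monomial, MvPolynomial.coeff_monomial]
  refine if_congr ?_ rfl rfl
  rw [EquivLike.apply_eq_iff_eq, funext_iff]

theorem stmt6 (k l : ℕ) (s : Fin k → ℕ) (r : Fin l → ℕ)
    (h : ∑ i, s i = ∑ j, r j) :
    MvPolynomial.coeff (Finsupp.equivFunOnFinite.symm s) (∏ j, hpoly k (r j)) =
      MvPolynomial.coeff (Finsupp.equivFunOnFinite.symm r) (∏ i, hpoly l (s i)) := by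
  rw [coeff_prod_hpoly, coeff_prod_hpoly]
  apply Finset.card_nbij' (i := fun M => fun i j => M j i) (j := fun N => fun j i => N i j)
  · intro M hM
    simp only [Finset.mem_filter, Fintype.mem_piFinset, Finset.Nat.mem_antidiagonalTuple] at hM ⊢
    exact Finset.mem_filter.mpr ⟨Fintype.mem_piFinset.mpr fun i => Finset.Nat.mem_antidiagonalTuple.mpr ((Finset.mem_filter.mp hM).2 i), fun j => Finset.Nat.mem_antidiagonalTuple.mp (Fintype.mem_piFinset.mp (Finset.mem_filter.mp hM).1 j)⟩
  · intro N hN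
    simp only [Finset.mem_filter, Fintype.mem_piFinset, Finset.Nat.mem_antidiagonalTuple] at hN ⊢
    exact Finset.mem_filter.mpr ⟨Fintype.mem_piFinset.mpr fun j => Finset.Nat.mem_antidiagonalTuple.mpr ((Finset.mem_filter.mp hN).2 j), fun i => Finset.Nat.mem_antidiagonalTuple.mp (Fintype.mem_piFinset.mp (Finset.mem_filter.mp hN).1 i)⟩
  · intro M _; rfl
  · intro N _; rfl
end

section
/- If one sender's message count s1 satisfies s1 ≥ s2+...+sk = m (the total sent by all others), and all n = s1 + m receivers receive one message each, then the configuration count is n!/(s1! s2! ... sk!); moreover, for fixed s2,...,sk with each equal to 1 (so m = k−1), the count of nonnegative integer matrices with column sums (s1, 1,...,1) and row sums corresponding to receivers (s1, 1,...,1) (one receiver receiving s1 and k−1 receivers receiving one each) is independent of s1 once s1 ≥ k−1. -/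
open MvPolynomial Finset

lemma hpoly_one (k : ℕ) : hpoly k 1 = ∑ i, MvPolynomial.X i := by
  have himg : Finset.Nat.antidiagonalTuple k 1 =
      Finset.univ.image (fun i : Fin k => (Pi.single i 1 : Fin k → ℕ)) := by
    ext d
    simp only [Finset.Nat.mem_antidiagonalTuple, Finset.mem_image, Finset.mem_univ, true_and]
    constructor
    · intro h
      have hex : ∃ i, d i ≠ 0 := by
        by_contra h'
        push_neg at h'
        simp [h'] at h
      obtain ⟨i, hi⟩ := hex
      have h1 : d i ≤ 1 := by
        rw [← h]
        exact Finset.single_le_sum (fun _ _ => Nat.zero_le _) (Finset.mem_univ i)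
      have h2 : d i = 1 := by omega
      have h3 : d i + ∑ j ∈ Finset.univ.erase i, d j = 1 := by
        rw [Finset.add_sum_erase _ _ (Finset.mem_univ i), h]
      refine ⟨i, funext fun j => ?_⟩
      rcases eq_or_ne j i with rfl | hj
      · simp [h2]
      · have : d j = 0 := by
          have := Finset.sum_eq_zero_iff.mp (by omega : ∑ j ∈ Finset.univ.erase i, d j = 0)
          exact this j (Finset.mem_erase.mpr ⟨hj, Finset.mem_univ j⟩)
        simp [Pi.single_apply, hj, this]
    · rintro ⟨i, rfl⟩
      simp [Pi.single_apply]
  have hinj : Function.Injective (fun i : Fin k => (Pi.single i 1 : Fin k → ℕ)) := by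
    intro i j h
    by_contra hne
    have := congrFun h i
    simp [Pi.single_apply, hne] at this
  rw [hpoly, himg, Finset.sum_image (fun i _ j _ h => hinj h)]
  refine Finset.sum_congr rfl fun i _ => ?_
  have : ∀ j : Fin k, MvPolynomial.X (R := ℕ) j ^ (Pi.single i 1 : Fin k → ℕ) j
      = if j = i then MvPolynomial.X j else 1 := by
    intro j
    rcases eq_or_ne j i with rfl | hj
    · simp
    · simp [Pi.single_apply, hj]
  simp only [this, Finset.prod_ite_eq', Finset.mem_univ, if_pos]

lemma prod_X_pow_eq (k : ℕ) (d : Fin k → ℕ) :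
    (∏ i, MvPolynomial.X (R := ℕ) i ^ d i) =
      MvPolynomial.monomial (Finsupp.equivFunOnFinite.symm d) (1 : ℕ) := by
  rw [MvPolynomial.monic_monomial_eq, Finsupp.prod_fintype]
  · rfl
  · intro i; exact pow_zero _

section Part2

variable (m : ℕ)

def Sset (a : ℕ) : Set (Fin (m + 1) → Fin (m + 1) → ℕ) :=
  {t | (∀ j, ∑ i, t j i = if j = 0 then a else 1) ∧
       (∀ i, ∑ j, t j i = if i = 0 then a else 1)}

def Phi (a b : ℕ) (t : Fin (m + 1) → Fin (m + 1) → ℕ) : Fin (m + 1) → Fin (m + 1) → ℕ :=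
  fun j i => if j = 0 ∧ i = 0 then t 0 0 + b - a else t j i

lemma Sset_bound {a : ℕ} {t : Fin (m + 1) → Fin (m + 1) → ℕ} (ht : t ∈ Sset m a) :
    a ≤ t 0 0 + m := by
  have h0 : ∑ j, t j 0 = a := by simpa using ht.2 0
  rw [Fin.sum_univ_succ] at h0
  have hle : ∑ j : Fin m, t j.succ 0 ≤ m := by
    calc ∑ j : Fin m, t j.succ 0 ≤ ∑ j : Fin m, 1 := by
          refine Finset.sum_le_sum fun j _ => ?_
          have h1 := ht.1 j.succ
          rw [if_neg (Fin.succ_ne_zero j)] at h1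
          have h2 := Finset.single_le_sum (f := t j.succ) (fun _ _ => Nat.zero_le _)
            (Finset.mem_univ 0)
          rw [h1] at h2
          exact h2
      _ = m := by simp
  omega

lemma Phi_mem {a b : ℕ} (ha : m ≤ a) (hb : m ≤ b)
    {t : Fin (m + 1) → Fin (m + 1) → ℕ} (ht : t ∈ Sset m a) :
    Phi m a b t ∈ Sset m b := by
  have hbd := Sset_bound m ht
  constructor
  · intro j
    refine Fin.cases ?_ (fun j => ?_) j
    · rw [if_pos rfl, Fin.sum_univ_succ]
      have h0 : t 0 0 + ∑ i : Fin m, t 0 i.succ = a := by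
        have := ht.1 0
        rw [if_pos rfl, Fin.sum_univ_succ] at this
        exact this
      have : ∀ i : Fin m, Phi m a b t 0 i.succ = t 0 i.succ := fun i => by
        simp [Phi, Fin.succ_ne_zero i]
      rw [Finset.sum_congr rfl fun i _ => this i]
      show t 0 0 + b - a + ∑ i : Fin m, t 0 i.succ = b
      omega
    · rw [if_neg (Fin.succ_ne_zero j)]
      have h1 := ht.1 j.succ
      rw [if_neg (Fin.succ_ne_zero j)] at h1
      calc ∑ i, Phi m a b t j.succ i = ∑ i, t j.succ i :=
            Finset.sum_congr rfl fun i _ => by simp [Phi, Fin.succ_ne_zero j]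
        _ = 1 := h1
  · intro i
    refine Fin.cases ?_ (fun i => ?_) i
    · rw [if_pos rfl, Fin.sum_univ_succ]
      have h0 : t 0 0 + ∑ j : Fin m, t j.succ 0 = a := by
        have := ht.2 0
        rw [if_pos rfl, Fin.sum_univ_succ] at this
        exact this
      have : ∀ j : Fin m, Phi m a b t j.succ 0 = t j.succ 0 := fun j => by
        simp [Phi, Fin.succ_ne_zero j]
      rw [Finset.sum_congr rfl fun j _ => this j]
      show t 0 0 + b - a + ∑ j : Fin m, t j.succ 0 = b
      omega
    · rw [if_neg (Fin.succ_ne_zero i)]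
      have h1 := ht.2 i.succ
      rw [if_neg (Fin.succ_ne_zero i)] at h1
      calc ∑ j, Phi m a b t j i.succ = ∑ j, t j i.succ :=
            Finset.sum_congr rfl fun j _ => by simp [Phi, Fin.succ_ne_zero i]
        _ = 1 := h1

lemma Phi_inv {a b : ℕ} (ha : m ≤ a) (hb : m ≤ b)
    {t : Fin (m + 1) → Fin (m + 1) → ℕ} (ht : t ∈ Sset m a) :
    Phi m b a (Phi m a b t) = t := by
  have hbd := Sset_bound m ht
  funext j i
  by_cases h : j = 0 ∧ i = 0
  · obtain ⟨rfl, rfl⟩ := h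
    show Phi m a b t 0 0 + a - b = t 0 0
    show (if (0 : Fin (m+1)) = 0 ∧ (0 : Fin (m+1)) = 0 then t 0 0 + b - a else t 0 0) + a - b
      = t 0 0
    rw [if_pos ⟨rfl, rfl⟩]
    omega
  · simp only [Phi, if_neg h]

lemma Sset_ncard {a b : ℕ} (ha : m ≤ a) (hb : m ≤ b) :
    (Sset m a).ncard = (Sset m b).ncard := by
  have himg : Phi m a b '' Sset m a = Sset m b := by
    apply Set.Subset.antisymm
    · rintro _ ⟨t, ht, rfl⟩
      exact Phi_mem m ha hb ht
    · intro u hu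
      exact ⟨Phi m b a u, Phi_mem m hb ha hu, Phi_inv m hb ha hu⟩
  have hinj : Set.InjOn (Phi m a b) (Sset m a) := by
    intro t ht t' ht' h
    rw [← Phi_inv m ha hb ht, ← Phi_inv m ha hb ht', h]
  rw [← himg, Set.ncard_image_of_injOn hinj]

end Part2

theorem stmt15 (m : ℕ) (s : Fin (m + 1) → ℕ) (n : ℕ)
    (hn : n = ∑ j, s j) (hdom : ∑ j ∈ Finset.univ.erase 0, s j ≤ s 0) :
    MvPolynomial.coeff (Finsupp.equivFunOnFinite.symm s) ((hpoly (m + 1) 1) ^ n) =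
        Nat.factorial n / ∏ j, Nat.factorial (s j)
    ∧ ∀ a b : ℕ, m ≤ a → m ≤ b →
        Set.ncard {t : Fin (m + 1) → Fin (m + 1) → ℕ |
            (∀ j, ∑ i, t j i = if j = 0 then a else 1) ∧
            (∀ i, ∑ j, t j i = if i = 0 then a else 1)} =
        Set.ncard {t : Fin (m + 1) → Fin (m + 1) → ℕ |
            (∀ j, ∑ i, t j i = if j = 0 then b else 1) ∧
            (∀ i, ∑ j, t j i = if i = 0 then b else 1)} := by
  constructor
  · rw [hpoly_one, Finset.sum_pow_eq_sum_piAntidiag, MvPolynomial.coeff_sum]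
    have hs : s ∈ Finset.piAntidiag Finset.univ n := by
      rw [Finset.mem_piAntidiag]
      exact ⟨hn.symm, fun i _ => Finset.mem_univ i⟩
    rw [Finset.sum_eq_single s]
    · rw [prod_X_pow_eq, ← MvPolynomial.C_eq_coe_nat, MvPolynomial.coeff_C_mul,
        MvPolynomial.coeff_monomial, if_pos rfl, mul_one, Nat.multinomial, ← hn, Nat.cast_id]
    · intro d hd hds
      rw [prod_X_pow_eq, ← MvPolynomial.C_eq_coe_nat, MvPolynomial.coeff_C_mul,
        MvPolynomial.coeff_monomial, if_neg, mul_zero]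
      intro h
      exact hds (Finsupp.equivFunOnFinite.symm.injective h)
    · intro h
      exact absurd hs h
  · intro a b ha hb
    exact Sset_ncard m ha hb
end
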